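/- Let (Ω,μ) be a probability space and F₁,...,F_ℓ : Ω → {0,1} random variables such that there exists ρ ∈ (0,1) with the property that for every j, the conditional probability that F_j = 1 given F₁,...,F_{j-1} is at least ρ. Let G₁,...,G_ℓ : Ω → {0,1} be independent random variables with μ(G_i = 1) = ρ. Then for all r, μ({ω : Σ_{i=1}^ℓ F_i(ω) ≤ r}) ≤ μ({ω : Σ_{i=1}^ℓ G_i(ω) ≤ r}). -/

import Mathlib

open MeasureTheory ProbabilityTheory
open scoped ENNReal

/-- CDF of a binomial-like recursion, with parameter `p : ℝ≥0∞`. -/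
noncomputable def binCDF (p : ℝ≥0∞) : ℕ → ℝ → ℝ≥0∞
  | 0, r => if 0 ≤ r then 1 else 0
  | (n + 1), r => (1 - p) * binCDF p n r + p * binCDF p n (r - 1)

lemma filter_lt_succ_eq_insert {ℓ n : ℕ} (hn : n < ℓ) :
    (Finset.univ.filter (fun i : Fin ℓ => (i : ℕ) < n + 1))
      = insert (⟨n, hn⟩ : Fin ℓ) (Finset.univ.filter (fun i : Fin ℓ => (i : ℕ) < n)) := by
  ext i
  simp only [Finset.mem_filter, Finset.mem_insert, Finset.mem_univ, true_and, Nat.lt_succ_iff_lt_or_eq,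
    Fin.ext_iff]
  tauto

/-- splitting the sublevel set of a partial sum according to the value of the new variable. -/
lemma split_set {Ω : Type*} {ℓ n : ℕ} (hn : n < ℓ) (F : Fin ℓ → Ω → ℝ)
    (hF01 : ∀ j ω, F j ω = 0 ∨ F j ω = 1) (r : ℝ) :
    {ω | ∑ i ∈ Finset.univ.filter (fun i : Fin ℓ => (i : ℕ) < n + 1), F i ω ≤ r}
      = ({ω | ∑ i ∈ Finset.univ.filter (fun i : Fin ℓ => (i : ℕ) < n), F i ω ≤ r}
          ∩ {ω | F (⟨n, hn⟩ : Fin ℓ) ω = 0})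
        ∪ ({ω | ∑ i ∈ Finset.univ.filter (fun i : Fin ℓ => (i : ℕ) < n), F i ω ≤ r - 1}
          ∩ {ω | F (⟨n, hn⟩ : Fin ℓ) ω = 1}) := by
  have hnot : (⟨n, hn⟩ : Fin ℓ) ∉ Finset.univ.filter (fun i : Fin ℓ => (i : ℕ) < n) := by
    simp
  ext ω
  simp only [Set.mem_union, Set.mem_inter_iff, Set.mem_setOf_eq, filter_lt_succ_eq_insert hn,
    Finset.sum_insert hnot]
  rcases hF01 ⟨n, hn⟩ ω with h | h <;>
    simp [h, Set.mem_setOf_eq, le_sub_iff_add_le, add_comm]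

theorem domination_by_independent {Ω Ω' : Type*} [MeasurableSpace Ω] [MeasurableSpace Ω']
    (μ : Measure Ω) (ν : Measure Ω') [IsProbabilityMeasure μ] [IsProbabilityMeasure ν]
    (ℓ : ℕ) (F : Fin ℓ → Ω → ℝ) (G : Fin ℓ → Ω' → ℝ) (ρ : ℝ)
    (hρ0 : 0 < ρ) (hρ1 : ρ < 1)
    (hFmeas : ∀ j, Measurable (F j))
    (hF01 : ∀ j ω, F j ω = 0 ∨ F j ω = 1)
    (hcond : ∀ j : Fin ℓ, ∀ A : Set Ω,
      MeasurableSet[⨆ i : {i : Fin ℓ // i < j}, MeasurableSpace.comap (F i) inferInstance] A →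
      0 < μ A → ENNReal.ofReal ρ * μ A ≤ μ (A ∩ {ω | F j ω = 1}))
    (hGmeas : ∀ i, Measurable (G i))
    (hG01 : ∀ i ω, G i ω = 0 ∨ G i ω = 1)
    (hGindep : iIndepFun G ν)
    (hGρ : ∀ i, ν {ω | G i ω = 1} = ENNReal.ofReal ρ) :
    ∀ r : ℝ, μ {ω | ∑ i, F i ω ≤ r} ≤ ν {ω | ∑ i, G i ω ≤ r} := by
  intro r
  set p : ℝ≥0∞ := ENNReal.ofReal ρ with hp
  have hp1 : p ≤ 1 := by
    rw [hp, ← ENNReal.ofReal_one]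
    exact ENNReal.ofReal_le_ofReal hρ1.le
  -- F side: partial sums are dominated by binCDF
  have hF : ∀ n, n ≤ ℓ → ∀ s : ℝ,
      μ {ω | ∑ i ∈ Finset.univ.filter (fun i : Fin ℓ => (i : ℕ) < n), F i ω ≤ s}
        ≤ binCDF p n s := by
    intro n
    induction n with
    | zero =>
      intro _ s
      by_cases hs : 0 ≤ s
      · simp only [binCDF, if_pos hs]
        exact prob_le_one
      · have : {ω : Ω | ∑ i ∈ Finset.univ.filter (fun i : Fin ℓ => (i : ℕ) < 0), F i ω ≤ s}
            = ∅ := by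
          ext ω; simp [hs]
        simp [binCDF, hs, this]
    | succ n ih =>
      intro hn s
      have hnℓ : n < ℓ := hn
      set j : Fin ℓ := ⟨n, hnℓ⟩ with hj
      set A0 := {ω | ∑ i ∈ Finset.univ.filter (fun i : Fin ℓ => (i : ℕ) < n), F i ω ≤ s} with hA0
      set A1 := {ω | ∑ i ∈ Finset.univ.filter (fun i : Fin ℓ => (i : ℕ) < n), F i ω ≤ s - 1}
        with hA1
      have hsummeas : Measurable (fun ω => ∑ i ∈ Finset.univ.filter
          (fun i : Fin ℓ => (i : ℕ) < n), F i ω) :=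
        Finset.measurable_sum _ (fun i _ => hFmeas i)
      have hA0m : MeasurableSet A0 := measurableSet_le hsummeas measurable_const
      have hA1m : MeasurableSet A1 := measurableSet_le hsummeas measurable_const
      have hFj1 : MeasurableSet {ω | F j ω = 1} := hFmeas j (measurableSet_singleton 1)
      have hFj0 : MeasurableSet {ω | F j ω = 0} := hFmeas j (measurableSet_singleton 0)
      have hA10 : A1 ⊆ A0 := by
        intro ω hω
        simp only [hA0, hA1, Set.mem_setOf_eq] at *
        linarith
      -- measurability of A0, A1 w.r.t. the past σ-algebra
      set m : MeasurableSpace Ω :=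
        ⨆ i : {i : Fin ℓ // i < j}, MeasurableSpace.comap (F i) inferInstance with hm
      have hsum_m : Measurable[m] (fun ω => ∑ i ∈ Finset.univ.filter
          (fun i : Fin ℓ => (i : ℕ) < n), F i ω) := by
        apply Finset.measurable_sum
        intro i hi
        have hij : i < j := by
          simp only [Finset.mem_filter, Finset.mem_univ, true_and] at hi
          exact hi
        have hle : MeasurableSpace.comap (F i) inferInstance ≤ m :=
          le_iSup (fun k : {i : Fin ℓ // i < j} =>
            MeasurableSpace.comap (F k) inferInstance) ⟨i, hij⟩
        exact Measurable.of_comap_le hle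
      have hA0m' : MeasurableSet[m] A0 := measurableSet_le hsum_m measurable_const
      have hA1m' : MeasurableSet[m] A1 := measurableSet_le hsum_m measurable_const
      have hDm' : MeasurableSet[m] (A0 \ A1) := hA0m'.diff hA1m'
      -- the key conditional bound
      have hkey : p * μ (A0 \ A1) ≤ μ ((A0 \ A1) ∩ {ω | F j ω = 1}) := by
        rcases eq_or_lt_of_le (show (0 : ℝ≥0∞) ≤ μ (A0 \ A1) from zero_le) with h0 | h0
        · simp [← h0]
        · exact hcond j (A0 \ A1) hDm' h0
      -- decomposition of the (n+1) sublevel set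
      have hsplit := split_set hnℓ F hF01 s
      rw [hsplit]
      have hdisj : Disjoint (A0 ∩ {ω | F j ω = 0}) (A1 ∩ {ω | F j ω = 1}) := by
        apply Set.disjoint_left.2
        rintro ω ⟨_, h0⟩ ⟨_, h1⟩
        rw [Set.mem_setOf_eq] at h0 h1
        simp [h0] at h1
      rw [measure_union hdisj (hA1m.inter hFj1)]
      -- identity 1: μ(A0∩{F=0}) + μ(A1∩{F=1}) + μ((A0\A1)∩{F=1}) = μ A0
      have hid1 : μ (A0 ∩ {ω | F j ω = 0}) + μ (A1 ∩ {ω | F j ω = 1})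
          + μ ((A0 \ A1) ∩ {ω | F j ω = 1}) = μ A0 := by
        have h1 : μ (A1 ∩ {ω | F j ω = 1}) + μ ((A0 \ A1) ∩ {ω | F j ω = 1})
            = μ (A0 ∩ {ω | F j ω = 1}) := by
          rw [← measure_union (Set.disjoint_left.2 (by
            rintro ω ⟨h1, _⟩ ⟨h2, _⟩
            exact h2.2 h1)) ((hA0m.diff hA1m).inter hFj1)]
          congr 1
          rw [← Set.union_inter_distrib_right, Set.union_diff_cancel hA10]
        have h2 : μ (A0 ∩ {ω | F j ω = 0}) + μ (A0 ∩ {ω | F j ω = 1}) = μ A0 := by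
          rw [← measure_union (Set.disjoint_left.2 (by
            rintro ω ⟨_, h0⟩ ⟨_, h1⟩
            rw [Set.mem_setOf_eq] at h0 h1
            simp [h0] at h1)) (hA0m.inter hFj1)]
          congr 1
          rw [← Set.inter_union_distrib_left]
          apply Set.inter_eq_self_of_subset_left
          intro ω _
          rcases hF01 j ω with h | h
          · exact Or.inl h
          · exact Or.inr h
        rw [add_assoc, h1, h2]
      -- identity 2: (1-p) μ A0 + p μ A1 + p μ (A0\A1) = μ A0
      have hid2 : (1 - p) * μ A0 + p * μ A1 + p * μ (A0 \ A1) = μ A0 := by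
        have h1 : μ A1 + μ (A0 \ A1) = μ A0 := by
          rw [← measure_union (disjoint_sdiff_self_right) (hA0m.diff hA1m),
            Set.union_diff_cancel hA10]
        rw [add_assoc, ← mul_add, h1, ← add_mul, tsub_add_cancel_of_le hp1, one_mul]
      -- conclude the step inequality
      have hstep : μ (A0 ∩ {ω | F j ω = 0}) + μ (A1 ∩ {ω | F j ω = 1})
          ≤ (1 - p) * μ A0 + p * μ A1 := by
        have hfin : μ ((A0 \ A1) ∩ {ω | F j ω = 1}) ≠ ⊤ := measure_ne_top μ _
        rw [← ENNReal.add_le_add_iff_right hfin, hid1]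
        calc μ A0 = (1 - p) * μ A0 + p * μ A1 + p * μ (A0 \ A1) := hid2.symm
          _ ≤ (1 - p) * μ A0 + p * μ A1 + μ ((A0 \ A1) ∩ {ω | F j ω = 1}) := by
              exact add_le_add le_rfl hkey
      refine hstep.trans ?_
      show _ ≤ (1 - p) * binCDF p n s + p * binCDF p n (s - 1)
      exact add_le_add (mul_le_mul' le_rfl (ih hnℓ.le s)) (mul_le_mul' le_rfl (ih hnℓ.le (s - 1)))
  -- G side: binCDF is dominated by partial sums probabilities
  have hG : ∀ n, n ≤ ℓ → ∀ s : ℝ,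
      binCDF p n s ≤
        ν {ω | ∑ i ∈ Finset.univ.filter (fun i : Fin ℓ => (i : ℕ) < n), G i ω ≤ s} := by
    intro n
    induction n with
    | zero =>
      intro _ s
      by_cases hs : 0 ≤ s
      · have : {ω : Ω' | ∑ i ∈ Finset.univ.filter (fun i : Fin ℓ => (i : ℕ) < 0), G i ω ≤ s}
            = Set.univ := by
          ext ω; simp [hs]
        simp [binCDF, hs, this]
      · simp [binCDF, hs]
    | succ n ih =>
      intro hn s
      have hnℓ : n < ℓ := hn
      set j : Fin ℓ := ⟨n, hnℓ⟩ with hj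
      set t := Finset.univ.filter (fun i : Fin ℓ => (i : ℕ) < n) with ht
      set B0 := {ω | ∑ i ∈ t, G i ω ≤ s} with hB0
      set B1 := {ω | ∑ i ∈ t, G i ω ≤ s - 1} with hB1
      have hjt : j ∉ t := by simp [ht, hj]
      have hindep : IndepFun (∑ i ∈ t, G i) (G j) ν :=
        hGindep.indepFun_finsetSum_of_notMem hGmeas hjt
      have hsum_eq : (∑ i ∈ t, G i) = fun ω => ∑ i ∈ t, G i ω := by
        funext ω; simp [Finset.sum_apply]
      -- ν {G j = 0} = 1 - p
      have hGj0 : ν {ω | G j ω = 0} = 1 - p := by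
        have hcompl : {ω | G j ω = 0} = {ω | G j ω = 1}ᶜ := by
          ext ω
          rcases hG01 j ω with h | h <;> simp [h, Set.mem_setOf_eq]
        rw [hcompl, measure_compl
          (show MeasurableSet {ω | G j ω = 1} from hGmeas j (measurableSet_singleton 1))
          (measure_ne_top ν _), hGρ j, measure_univ]
      have hmul : ∀ (u : ℝ) (c : ℝ),
          ν ({ω | ∑ i ∈ t, G i ω ≤ u} ∩ {ω | G j ω = c})
            = ν {ω | ∑ i ∈ t, G i ω ≤ u} * ν {ω | G j ω = c} := by
        intro u c
        have h1 : {ω | ∑ i ∈ t, G i ω ≤ u} = (∑ i ∈ t, G i) ⁻¹' Set.Iic u := by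
          rw [hsum_eq]; rfl
        have h2 : {ω | G j ω = c} = G j ⁻¹' {c} := rfl
        rw [h1, h2]
        exact hindep.measure_inter_preimage_eq_mul _ _ measurableSet_Iic
          (measurableSet_singleton c)
      -- split
      have hsplit := split_set hnℓ G hG01 s
      rw [hsplit]
      have hGj1m : MeasurableSet {ω | G j ω = 1} := hGmeas j (measurableSet_singleton 1)
      have hsummeas : Measurable (fun ω => ∑ i ∈ t, G i ω) :=
        Finset.measurable_sum _ (fun i _ => hGmeas i)
      have hB1m : MeasurableSet B1 := measurableSet_le hsummeas measurable_const
      have hdisj : Disjoint (B0 ∩ {ω | G j ω = 0}) (B1 ∩ {ω | G j ω = 1}) := by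
        apply Set.disjoint_left.2
        rintro ω ⟨_, h0⟩ ⟨_, h1⟩
        rw [Set.mem_setOf_eq] at h0 h1
        simp [h0] at h1
      rw [measure_union hdisj (hB1m.inter hGj1m)]
      rw [show B0 ∩ {ω | G j ω = 0} = {ω | ∑ i ∈ t, G i ω ≤ s} ∩ {ω | G j ω = 0} from rfl,
        show B1 ∩ {ω | G j ω = 1} = {ω | ∑ i ∈ t, G i ω ≤ s - 1} ∩ {ω | G j ω = 1} from rfl,
        hmul s 0, hmul (s - 1) 1, hGj0, hGρ j]
      show (1 - p) * binCDF p n s + p * binCDF p n (s - 1) ≤ _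
      rw [mul_comm _ (1 - p), mul_comm _ p] at *
      exact add_le_add (mul_le_mul' le_rfl (ih hnℓ.le s)) (mul_le_mul' le_rfl (ih hnℓ.le (s - 1)))
  -- combine at n = ℓ
  have hfull : (Finset.univ.filter (fun i : Fin ℓ => (i : ℕ) < ℓ)) = Finset.univ := by
    ext i; simp [i.isLt]
  have h1 := hF ℓ le_rfl r
  have h2 := hG ℓ le_rfl r
  rw [hfull] at h1 h2
  exact h1.trans h2
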